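/- Let (A, ‖·‖) be a normed algebra. The following are equivalent: (a) the given norm on A is maximal, i.e., for every algebra norm ν on A there is a constant C > 0 such that ν(a) ≤ C·‖a‖ for every a ∈ A; (b) every homomorphism from A into a normed algebra is continuous; (c) every injective homomorphism from A into a Banach algebra is continuous. -/

import Mathlib

universe u

/-- A function `ν : A → ℝ` is an algebra norm on the algebra `A` over `𝕜` if it is a norm
(definite, subadditive, absolutely homogeneous) which is submultiplicative. -/
def IsAlgebraNorm (𝕜 : Type*) [RCLike 𝕜] {A : Type*} [NonUnitalRing A] [Module 𝕜 A]
    (ν : A → ℝ) : Prop :=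
  (∀ a : A, ν a = 0 ↔ a = 0) ∧ (∀ a b : A, ν (a + b) ≤ ν a + ν b) ∧
    (∀ (c : 𝕜) (a : A), ν (c • a) = ‖c‖ * ν a) ∧ ∀ a b : A, ν (a * b) ≤ ν a * ν b

noncomputable section AuxNonUnitalCompletion

open IsDenseInducing UniformSpace Function UniformSpace.Completion

namespace StmtAux

variable {B : Type*} [NonUnitalNormedRing B]

instance : Mul (Completion B) :=
  ⟨curry <| (isDenseInducing_coe.prodMap isDenseInducing_coe).extend ((↑) ∘ uncurry (· * ·))⟩

theorem coe_mul' (a b : B) : ((a * b : B) : Completion B) = a * b :=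
  ((isDenseInducing_coe.prodMap isDenseInducing_coe).extend_eq
      ((continuous_coe B).comp continuous_mul) (a, b)).symm

theorem continuous_mul'' : Continuous fun p : Completion B × Completion B => p.1 * p.2 := by
  let m := (AddMonoidHom.mul : B →+ B →+ B).compr₂ toCompl
  have : Continuous fun p : B × B => m p.1 p.2 := by
    apply (continuous_coe B).comp _
    simp only [m, AddMonoidHom.compr₂_apply, AddMonoidHom.mul_apply]
    exact _root_.continuous_mul
  have di : IsDenseInducing (toCompl : B → Completion B) := isDenseInducing_coe
  convert di.extend_Z_bilin di this
  rfl

theorem Continuous.mul' {β : Type*} [TopologicalSpace β] {f g : β → Completion B}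
    (hf : Continuous f) (hg : Continuous g) : Continuous fun b => f b * g b :=
  continuous_mul''.comp (hf.prodMk hg)

instance : NonUnitalRing (Completion B) :=
  { (inferInstance : AddCommGroup (Completion B)),
    (inferInstance : Mul (Completion B)) with
    zero_mul := fun a =>
      Completion.induction_on a
        (isClosed_eq (Continuous.mul' continuous_const continuous_id) continuous_const)
        fun a => by rw [← coe_zero, ← coe_mul', zero_mul]
    mul_zero := fun a =>
      Completion.induction_on a
        (isClosed_eq (Continuous.mul' continuous_id continuous_const) continuous_const)
        fun a => by rw [← coe_zero, ← coe_mul', mul_zero]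
    mul_assoc := fun a b c =>
      Completion.induction_on₃ a b c
        (isClosed_eq
          (Continuous.mul' (Continuous.mul' continuous_fst (continuous_fst.comp continuous_snd))
            (continuous_snd.comp continuous_snd))
          (Continuous.mul' continuous_fst
            (Continuous.mul' (continuous_fst.comp continuous_snd)
              (continuous_snd.comp continuous_snd))))
        fun a b c => by rw [← coe_mul', ← coe_mul', ← coe_mul', ← coe_mul', mul_assoc]
    left_distrib := fun a b c =>
      Completion.induction_on₃ a b c
        (isClosed_eq
          (Continuous.mul' continuous_fst
            (Continuous.add (continuous_fst.comp continuous_snd)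
              (continuous_snd.comp continuous_snd)))
          (Continuous.add (Continuous.mul' continuous_fst (continuous_fst.comp continuous_snd))
            (Continuous.mul' continuous_fst (continuous_snd.comp continuous_snd))))
        fun a b c => by rw [← coe_add, ← coe_mul', ← coe_mul', ← coe_mul', ← coe_add, mul_add]
    right_distrib := fun a b c =>
      Completion.induction_on₃ a b c
        (isClosed_eq
          (Continuous.mul'
            (Continuous.add continuous_fst (continuous_fst.comp continuous_snd))
            (continuous_snd.comp continuous_snd))
          (Continuous.add
            (Continuous.mul' continuous_fst (continuous_snd.comp continuous_snd))
            (Continuous.mul' (continuous_fst.comp continuous_snd)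
              (continuous_snd.comp continuous_snd))))
        fun a b c => by rw [← coe_add, ← coe_mul', ← coe_mul', ← coe_mul', ← coe_add, add_mul] }

instance : NonUnitalNormedRing (Completion B) :=
  { (inferInstance : NormedAddCommGroup (Completion B)),
    (inferInstance : NonUnitalRing (Completion B)) with
    norm_mul_le := fun x y => by
      induction x, y using Completion.induction_on₂ with
      | hp =>
        exact isClosed_le (continuous_norm.comp continuous_mul'')
          ((continuous_norm.comp continuous_fst).mul (continuous_norm.comp continuous_snd))
      | ih x y =>
        simp only [← coe_mul', Completion.norm_coe]
        exact norm_mul_le x y }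

variable {𝕜 : Type*} [NormedField 𝕜] [NormedSpace 𝕜 B]

instance [IsScalarTower 𝕜 B B] : IsScalarTower 𝕜 (Completion B) (Completion B) :=
  ⟨fun c x y => by
    show (c • x) * y = c • (x * y)
    induction x, y using Completion.induction_on₂ with
    | hp =>
      exact isClosed_eq
        (Continuous.mul' (continuous_fst.const_smul c) continuous_snd)
        ((Continuous.mul' continuous_fst continuous_snd).const_smul c)
    | ih x y =>
      rw [← Completion.coe_smul, ← coe_mul', ← coe_mul', ← Completion.coe_smul,
        smul_mul_assoc]⟩

instance [SMulCommClass 𝕜 B B] : SMulCommClass 𝕜 (Completion B) (Completion B) :=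
  ⟨fun c x y => by
    show c • (x * y) = x * (c • y)
    induction x, y using Completion.induction_on₂ with
    | hp =>
      exact isClosed_eq
        ((Continuous.mul' continuous_fst continuous_snd).const_smul c)
        (Continuous.mul' continuous_fst (continuous_snd.const_smul c))
    | ih x y =>
      rw [← Completion.coe_smul, ← coe_mul', ← coe_mul', ← Completion.coe_smul,
        mul_smul_comm]⟩

end StmtAux

/-- Type copy of `A` to be equipped with the norm `ν`. -/
def NuCopy {A : Type u} (_ν : A → ℝ) : Type u := A

section NuCopyInstances

variable {𝕜 : Type*} [RCLike 𝕜] {A : Type u} [NonUnitalNormedRing A] [NormedSpace 𝕜 A]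
  {ν : A → ℝ}

theorem IsAlgebraNorm.nonneg (h : IsAlgebraNorm 𝕜 ν) (a : A) : 0 ≤ ν a := by
  have h0 : ν 0 = 0 := (h.1 0).mpr rfl
  have hneg : ν (-a) = ν a := by
    have := h.2.2.1 (-1 : 𝕜) a
    simpa using this
  have := h.2.1 a (-a)
  rw [add_neg_cancel, h0, hneg] at this
  linarith

/-- The non-unital normed ring structure on `NuCopy ν`. -/
noncomputable def nuRing (h : IsAlgebraNorm 𝕜 ν) : NonUnitalNormedRing (NuCopy ν) :=
  letI : NonUnitalRing (NuCopy ν) := (inferInstance : NonUnitalRing A)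
  letI nacg : NormedAddCommGroup (NuCopy ν) := AddGroupNorm.toNormedAddCommGroup
    { toFun := ν
      map_zero' := (h.1 0).mpr rfl
      add_le' := h.2.1
      neg' := fun a => by
        have := h.2.2.1 (-1 : 𝕜) a
        exact (congrArg ν (neg_one_smul 𝕜 (show A from a))).symm.trans
          (this.trans (by rw [norm_neg, norm_one, one_mul]))
      eq_zero_of_map_eq_zero' := fun a ha => (h.1 a).mp ha }
  { nacg, (inferInstance : NonUnitalRing (NuCopy ν)) with
    norm_mul_le := h.2.2.2 }

end NuCopyInstances

/-- Adding the given norm to a submultiplicative seminorm-like function gives an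
algebra norm. -/
theorem isAlgebraNorm_add_norm {𝕜 : Type*} [RCLike 𝕜] {A : Type u} [NonUnitalNormedRing A]
    [NormedSpace 𝕜 A] (f : A → ℝ) (hnn : ∀ a, 0 ≤ f a)
    (hadd : ∀ a b : A, f (a + b) ≤ f a + f b)
    (hsmul : ∀ (c : 𝕜) (a : A), f (c • a) = ‖c‖ * f a)
    (hmul : ∀ a b : A, f (a * b) ≤ f a * f b) :
    IsAlgebraNorm 𝕜 (fun a => f a + ‖a‖) := by
  refine ⟨fun a => ?_, fun a b => ?_, fun c a => ?_, fun a b => ?_⟩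
  · constructor
    · intro hfa
      have hfa' : f a + ‖a‖ = 0 := hfa
      have h1 : ‖a‖ = 0 := by
        have := hnn a
        have := norm_nonneg a
        linarith
      exact norm_eq_zero.mp h1
    · rintro rfl
      have h0 : f 0 = 0 := by
        have h1 := hsmul (0 : 𝕜) (0 : A)
        simpa using h1
      simp [h0]
  · have := hadd a b
    have := norm_add_le a b
    dsimp only
    linarith
  · show f (c • a) + ‖c • a‖ = ‖c‖ * (f a + ‖a‖)
    rw [hsmul, norm_smul]
    ring
  · have h1 := hmul a b
    have h2 := norm_mul_le a b
    have h3 := hnn a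
    have h4 := hnn b
    have h5 := norm_nonneg a
    have h6 := norm_nonneg b
    dsimp only
    nlinarith

/-- For a normed algebra `A` the following are equivalent:
(a) the given norm on `A` is maximal;
(b) every homomorphism from `A` into a normed algebra is continuous;
(c) every injective homomorphism from `A` into a Banach algebra is continuous. -/
theorem statement3 {𝕜 : Type*} [RCLike 𝕜] (A : Type u) [NonUnitalNormedRing A]
    [NormedSpace 𝕜 A] [IsScalarTower 𝕜 A A] [SMulCommClass 𝕜 A A] :
    ((∀ ν : A → ℝ, IsAlgebraNorm 𝕜 ν → ∃ C > 0, ∀ a : A, ν a ≤ C * ‖a‖) ↔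
      (∀ (B : Type u) [NonUnitalNormedRing B] [NormedSpace 𝕜 B] [IsScalarTower 𝕜 B B]
        [SMulCommClass 𝕜 B B] (φ : A →ₙₐ[𝕜] B), Continuous φ)) ∧
    ((∀ (B : Type u) [NonUnitalNormedRing B] [NormedSpace 𝕜 B] [IsScalarTower 𝕜 B B]
        [SMulCommClass 𝕜 B B] (φ : A →ₙₐ[𝕜] B), Continuous φ) ↔
      (∀ (B : Type u) [NonUnitalNormedRing B] [NormedSpace 𝕜 B] [IsScalarTower 𝕜 B B]
        [SMulCommClass 𝕜 B B] [CompleteSpace B] (φ : A →ₙₐ[𝕜] B),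
          Function.Injective φ → Continuous φ)) := by
  -- (a) → (b)
  have hab : (∀ ν : A → ℝ, IsAlgebraNorm 𝕜 ν → ∃ C > 0, ∀ a : A, ν a ≤ C * ‖a‖) →
      (∀ (B : Type u) [NonUnitalNormedRing B] [NormedSpace 𝕜 B] [IsScalarTower 𝕜 B B]
        [SMulCommClass 𝕜 B B] (φ : A →ₙₐ[𝕜] B), Continuous φ) := by
    intro ha B _ _ _ _ φ
    have hν : IsAlgebraNorm 𝕜 (fun a : A => ‖φ a‖ + ‖a‖) :=
      isAlgebraNorm_add_norm _ (fun a => norm_nonneg _)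
        (fun a b => by rw [map_add]; exact norm_add_le _ _)
        (fun c a => by rw [map_smul, norm_smul])
        (fun a b => by rw [map_mul]; exact norm_mul_le _ _)
    obtain ⟨C, hC, hbound⟩ := ha _ hν
    refine AddMonoidHomClass.continuous_of_bound φ C fun a => ?_
    have := hbound a
    have := norm_nonneg a
    linarith
  -- (c) → (a)
  have hca : (∀ (B : Type u) [NonUnitalNormedRing B] [NormedSpace 𝕜 B] [IsScalarTower 𝕜 B B]
        [SMulCommClass 𝕜 B B] [CompleteSpace B] (φ : A →ₙₐ[𝕜] B),
          Function.Injective φ → Continuous φ) →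
      (∀ ν : A → ℝ, IsAlgebraNorm 𝕜 ν → ∃ C > 0, ∀ a : A, ν a ≤ C * ‖a‖) := by
    intro hc ν hν
    have hnn : ∀ a : A, 0 ≤ ν a := hν.nonneg
    have hμ : IsAlgebraNorm 𝕜 (fun a : A => ν a + ‖a‖) :=
      isAlgebraNorm_add_norm _ hnn hν.2.1 hν.2.2.1 hν.2.2.2
    set μ : A → ℝ := fun a => ν a + ‖a‖ with hμdef
    letI : NonUnitalNormedRing (NuCopy μ) := nuRing hμ
    letI : Module 𝕜 (NuCopy μ) := (inferInstance : Module 𝕜 A)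
    letI : NormedSpace 𝕜 (NuCopy μ) := ⟨fun c a => le_of_eq (hμ.2.2.1 c a)⟩
    letI : IsScalarTower 𝕜 (NuCopy μ) (NuCopy μ) := (inferInstance : IsScalarTower 𝕜 A A)
    letI : SMulCommClass 𝕜 (NuCopy μ) (NuCopy μ) := (inferInstance : SMulCommClass 𝕜 A A)
    let ι : NuCopy μ → UniformSpace.Completion (NuCopy μ) :=
      UniformSpace.Completion.coe'
    have hι : ι = ((↑) : NuCopy μ → UniformSpace.Completion (NuCopy μ)) := rfl
    let ψ : A →ₙₐ[𝕜] UniformSpace.Completion (NuCopy μ) :=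
      { toFun := fun a => ι a
        map_smul' := fun c a => by
          exact UniformSpace.Completion.coe_smul (X := NuCopy μ) c a
        map_zero' := by
          exact UniformSpace.Completion.coe_zero (α := NuCopy μ)
        map_add' := fun a b => by
          exact UniformSpace.Completion.coe_add (α := NuCopy μ) a b
        map_mul' := fun a b => by
          exact StmtAux.coe_mul' (B := NuCopy μ) a b }
    have hinj : Function.Injective ψ := fun x y hxy =>
      UniformSpace.Completion.coe_injective (NuCopy μ) hxy
    have hcont : Continuous ψ := hc _ ψ hinj
    let ψₗ : A →ₗ[𝕜] UniformSpace.Completion (NuCopy μ) :=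
      { toFun := ψ
        map_add' := fun a b => map_add ψ a b
        map_smul' := fun c a => map_smul ψ c a }
    obtain ⟨C, hC, hbound⟩ := SemilinearMapClass.bound_of_continuous ψₗ hcont
    refine ⟨C, hC, fun a => ?_⟩
    have h1 : ‖ψₗ a‖ = μ a := UniformSpace.Completion.norm_coe (E := NuCopy μ) a
    have h2 := hbound a
    rw [h1] at h2
    have := norm_nonneg a
    simp only [μ] at h2
    linarith
  -- (b) → (a)
  have hba : (∀ (B : Type u) [NonUnitalNormedRing B] [NormedSpace 𝕜 B] [IsScalarTower 𝕜 B B]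
        [SMulCommClass 𝕜 B B] (φ : A →ₙₐ[𝕜] B), Continuous φ) →
      (∀ ν : A → ℝ, IsAlgebraNorm 𝕜 ν → ∃ C > 0, ∀ a : A, ν a ≤ C * ‖a‖) := by
    intro hb ν hν
    have hnn : ∀ a : A, 0 ≤ ν a := hν.nonneg
    letI : NonUnitalNormedRing (NuCopy ν) := nuRing hν
    letI : Module 𝕜 (NuCopy ν) := (inferInstance : Module 𝕜 A)
    letI : NormedSpace 𝕜 (NuCopy ν) := ⟨fun c a => le_of_eq (hν.2.2.1 c a)⟩
    letI : IsScalarTower 𝕜 (NuCopy ν) (NuCopy ν) := (inferInstance : IsScalarTower 𝕜 A A)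
    letI : SMulCommClass 𝕜 (NuCopy ν) (NuCopy ν) := (inferInstance : SMulCommClass 𝕜 A A)
    let ψ : A →ₙₐ[𝕜] NuCopy ν :=
      { toFun := fun a => (a : NuCopy ν)
        map_smul' := fun _ _ => rfl
        map_zero' := rfl
        map_add' := fun _ _ => rfl
        map_mul' := fun _ _ => rfl }
    have hcont : Continuous ψ := hb _ ψ
    let ψₗ : A →ₗ[𝕜] NuCopy ν :=
      { toFun := ψ
        map_add' := fun a b => map_add ψ a b
        map_smul' := fun c a => map_smul ψ c a }
    obtain ⟨C, hC, hbound⟩ := SemilinearMapClass.bound_of_continuous ψₗ hcont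
    exact ⟨C, hC, fun a => hbound a⟩
  -- (b) → (c)
  have hbc : (∀ (B : Type u) [NonUnitalNormedRing B] [NormedSpace 𝕜 B] [IsScalarTower 𝕜 B B]
        [SMulCommClass 𝕜 B B] (φ : A →ₙₐ[𝕜] B), Continuous φ) →
      (∀ (B : Type u) [NonUnitalNormedRing B] [NormedSpace 𝕜 B] [IsScalarTower 𝕜 B B]
        [SMulCommClass 𝕜 B B] [CompleteSpace B] (φ : A →ₙₐ[𝕜] B),
          Function.Injective φ → Continuous φ) := by
    intro hb B _ _ _ _ _ φ _
    exact hb B φ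
  exact ⟨⟨hab, hba⟩, ⟨hbc, fun hc => hab (hca hc)⟩⟩
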